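/- Let ν, γ ∈ (0,1) and let 𝒮 = K₁ ⊔ ... ⊔ K_H be pairwise disjoint subintervals of an interval I of equal length, that are (ν,γ)-uniformly distributed in I: there is a partition of I into L ≤ γH intervals I₁,...,I_L of equal length ℓ ∈ [ν, 2ν] such that for each j, #{i : K_i ⊂ I_j} ∈ [(1-γ)H/L, (1+γ)H/L]. Then there exists a universal constant C such that for any C¹ function G on I: |∫_{𝒮} G dλ - (λ(𝒮)/λ(I)) ∫_I G dλ| ≤ C (ν‖G‖_{C¹} + γ‖G‖_{C⁰}) λ(𝒮). -/

import Mathlib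

open MeasureTheory intervalIntegral Finset

set_option maxHeartbeats 2000000 in
/-- Extrapolation lemma: if a disjoint family of equal-length intervals is
(ν,γ)-uniformly distributed in I = [a,b], then for any C¹ function G the integral over
the family is close to the proportional share of the integral over I. -/
theorem stmt10 : ∃ C > 0, ∀ (ν γ : ℝ), ν ∈ Set.Ioo (0:ℝ) 1 → γ ∈ Set.Ioo (0:ℝ) 1 →
    ∀ (a b κ ℓ : ℝ) (H L : ℕ) (u : ℕ → ℝ) (G : ℝ → ℝ) (G0 G1 : ℝ),
    a < b → 0 < κ → 0 < H → 0 < L →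
    -- the intervals K_i = [u i, u i + κ] are pairwise disjoint subintervals of [a,b]
    (∀ i < H, Set.Icc (u i) (u i + κ) ⊆ Set.Icc a b) →
    (∀ i < H, ∀ j < H, i ≠ j →
      Disjoint (Set.Icc (u i) (u i + κ)) (Set.Icc (u j) (u j + κ))) →
    -- partition of [a,b] into L intervals of equal length ℓ ∈ [ν, 2ν]
    ν ≤ ℓ → ℓ ≤ 2 * ν → b = a + L * ℓ → (L : ℝ) ≤ γ * H →
    -- uniform distribution of the K_i among the partition intervals
    (∀ j < L,
      (1 - γ) * H / L ≤ (((Finset.range H).filter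
          (fun i => a + j * ℓ ≤ u i ∧ u i + κ ≤ a + (j+1) * ℓ)).card : ℝ) ∧
      (((Finset.range H).filter
          (fun i => a + j * ℓ ≤ u i ∧ u i + κ ≤ a + (j+1) * ℓ)).card : ℝ)
        ≤ (1 + γ) * H / L) →
    -- regularity and bounds on G
    ContDiffOn ℝ 1 G (Set.Icc a b) →
    (∀ x ∈ Set.Icc a b, |G x| ≤ G0) → (∀ x ∈ Set.Icc a b, |deriv G x| ≤ G1) →
    |(∑ i ∈ Finset.range H, ∫ x in (u i)..(u i + κ), G x) -
        ((H * κ) / (b - a)) * ∫ x in a..b, G x| ≤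
      C * (ν * (G0 + G1) + γ * G0) * (H * κ) := by
  refine ⟨8, by norm_num, ?_⟩
  intro ν γ hν hγ a b κ ℓ H L u G G0 G1 hab hκ hH hL hsub _hdisj hνℓ hℓν hba hLγ hcount hG hG0 hG1
  obtain ⟨hν0, hν1⟩ := hν
  obtain ⟨hγ0, hγ1⟩ := hγ
  have hℓ0 : 0 < ℓ := lt_of_lt_of_le hν0 hνℓ
  have hH0 : (0:ℝ) < H := by exact_mod_cast hH
  have hL0 : (0:ℝ) < L := by exact_mod_cast hL
  have hG0nn : 0 ≤ G0 := le_trans (abs_nonneg _) (hG0 a ⟨le_refl a, le_of_lt hab⟩)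
  have hG1nn : 0 ≤ G1 := le_trans (abs_nonneg _) (hG1 a ⟨le_refl a, le_of_lt hab⟩)
  have hGc : ContinuousOn G (Set.Icc a b) := hG.continuousOn
  -- the derivative within Icc is bounded by G1
  have hud : UniqueDiffOn ℝ (Set.Icc a b) := uniqueDiffOn_Icc hab
  have hdW : ∀ x ∈ Set.Icc a b, ‖derivWithin G (Set.Icc a b) x‖ ≤ G1 := by
    have hcd : ContinuousOn (derivWithin G (Set.Icc a b)) (Set.Icc a b) :=
      hG.continuousOn_derivWithin hud le_rfl
    intro x hx
    have hxcl : x ∈ closure (Set.Ioo a b) := by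
      rw [closure_Ioo hab.ne]; exact hx
    have hne : (nhdsWithin x (Set.Ioo a b)).NeBot :=
      mem_closure_iff_nhdsWithin_neBot.mp hxcl
    have htend : Filter.Tendsto (fun y => ‖derivWithin G (Set.Icc a b) y‖)
        (nhdsWithin x (Set.Ioo a b)) (nhds ‖derivWithin G (Set.Icc a b) x‖) :=
      ((hcd x hx).mono Set.Ioo_subset_Icc_self).norm
    refine le_of_tendsto htend ?_
    filter_upwards [self_mem_nhdsWithin] with y hy
    have : derivWithin G (Set.Icc a b) y = deriv G y :=
      derivWithin_of_mem_nhds (Icc_mem_nhds hy.1 hy.2)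
    rw [this, Real.norm_eq_abs]
    exact hG1 y (Set.Ioo_subset_Icc_self hy)
  -- Lipschitz estimate
  have hLip : ∀ x ∈ Set.Icc a b, ∀ y ∈ Set.Icc a b, |G y - G x| ≤ G1 * |y - x| := by
    intro x hx y hy
    have := Convex.norm_image_sub_le_of_norm_derivWithin_le
      (hG.differentiableOn one_ne_zero) hdW (convex_Icc a b) hx hy
    simpa [Real.norm_eq_abs] using this
  -- integrability
  have hint : ∀ c d : ℝ, a ≤ c → c ≤ d → d ≤ b → IntervalIntegrable G volume c d := by
    intro c d h1 h2 h3
    exact (hGc.mono (by rw [Set.uIcc_of_le h2]; exact Set.Icc_subset_Icc h1 h3)).intervalIntegrable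
  -- bound on integrals
  have hbound : ∀ c d : ℝ, a ≤ c → c ≤ d → d ≤ b → |∫ x in c..d, G x| ≤ G0 * (d - c) := by
    intro c d h1 h2 h3
    have hb : ∀ x ∈ Set.uIoc c d, ‖G x‖ ≤ G0 := by
      intro x hx
      rw [Set.uIoc_of_le h2] at hx
      exact hG0 x ⟨le_trans h1 (le_of_lt hx.1), le_trans hx.2 h3⟩
    have := intervalIntegral.norm_integral_le_of_norm_le_const hb
    rwa [Real.norm_eq_abs, abs_of_nonneg (sub_nonneg.mpr h2)] at this
  -- subinterval minus constant bound
  have hdiff : ∀ c d p : ℝ, a ≤ c → c ≤ d → d ≤ b → c ≤ p → p ≤ d →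
      |(∫ x in c..d, G x) - (d - c) * G p| ≤ G1 * (d - c) * (d - c) := by
    intro c d p h1 h2 h3 hp1 hp2
    have hpab : p ∈ Set.Icc a b := ⟨le_trans h1 hp1, le_trans hp2 h3⟩
    have heq : (∫ x in c..d, G x) - (d - c) * G p = ∫ x in c..d, (G x - G p) := by
      rw [intervalIntegral.integral_sub (hint c d h1 h2 h3) intervalIntegrable_const,
        intervalIntegral.integral_const, smul_eq_mul]
    rw [heq]
    have hb : ∀ x ∈ Set.uIoc c d, ‖G x - G p‖ ≤ G1 * (d - c) := by
      intro x hx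
      rw [Set.uIoc_of_le h2] at hx
      have hxab : x ∈ Set.Icc a b := ⟨le_trans h1 (le_of_lt hx.1), le_trans hx.2 h3⟩
      have h5 : |G x - G p| ≤ G1 * |x - p| := hLip p hpab x hxab
      have h6 : |x - p| ≤ d - c := abs_le.mpr ⟨by linarith [hx.1, hx.2], by linarith [hx.1, hx.2]⟩
      calc ‖G x - G p‖ = |G x - G p| := rfl
        _ ≤ G1 * |x - p| := h5
        _ ≤ G1 * (d - c) := by nlinarith [abs_nonneg (x - p)]
    have := intervalIntegral.norm_integral_le_of_norm_le_const hb
    rwa [Real.norm_eq_abs, abs_of_nonneg (sub_nonneg.mpr h2)] at this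
  -- notations
  set F : ℕ → ℝ := fun i => ∫ x in (u i)..(u i + κ), G x with hF
  set S : ℕ → Finset ℕ := fun j => (Finset.range H).filter
      (fun i => a + j * ℓ ≤ u i ∧ u i + κ ≤ a + (j+1) * ℓ) with hSdef
  set A : ℕ → ℝ := fun j => ∫ x in (a + j * ℓ)..(a + (j+1) * ℓ), G x with hA
  -- κ ≤ ℓ
  have hκℓ : κ ≤ ℓ := by
    have h0 := (hcount 0 hL).1
    have hpos : (0:ℝ) < (1 - γ) * H / L := div_pos (mul_pos (by linarith) hH0) hL0
    have : 0 < ((S 0).card : ℝ) := lt_of_lt_of_le hpos h0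
    have hcard : 0 < (S 0).card := by exact_mod_cast this
    obtain ⟨i, hi⟩ := Finset.card_pos.mp hcard
    have := (Finset.mem_filter.mp hi).2
    push_cast at this
    linarith [this.1, this.2]
  -- facts about subinterval endpoints
  have hKab : ∀ i < H, a ≤ u i ∧ u i + κ ≤ b := by
    intro i hi
    constructor
    · exact (hsub i hi ⟨le_refl _, by linarith⟩).1
    · exact (hsub i hi ⟨by linarith, le_refl _⟩).2
  have hIab : ∀ j < L, a ≤ a + (j:ℝ) * ℓ ∧ a + ((j:ℝ)+1) * ℓ ≤ b := by
    intro j hj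
    have hj1 : ((j:ℝ)+1) ≤ L := by exact_mod_cast Nat.succ_le_of_lt hj
    constructor
    · nlinarith [Nat.cast_nonneg (α := ℝ) j]
    · rw [hba]; nlinarith
  -- per-element estimate
  have hFA : ∀ j < L, ∀ i ∈ S j, |F i - (κ/ℓ) * A j| ≤ 4 * G1 * κ * ν := by
    intro j hj i hiS
    have hm := Finset.mem_filter.mp hiS
    have hiH : i < H := Finset.mem_range.mp hm.1
    obtain ⟨hc1, hc2⟩ := hm.2
    obtain ⟨ha1, ha2⟩ := hKab i hiH
    obtain ⟨hb1, hb2⟩ := hIab j hj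
    have e1 : |F i - (u i + κ - u i) * G (u i)| ≤ G1 * (u i + κ - u i) * (u i + κ - u i) :=
      hdiff (u i) (u i + κ) (u i) ha1 (by linarith) ha2 le_rfl (by linarith)
    have e2 : |A j - (a + ((j:ℝ)+1) * ℓ - (a + (j:ℝ) * ℓ)) * G (u i)| ≤
        G1 * (a + ((j:ℝ)+1) * ℓ - (a + (j:ℝ) * ℓ)) * (a + ((j:ℝ)+1) * ℓ - (a + (j:ℝ) * ℓ)) :=
      hdiff (a + (j:ℝ) * ℓ) (a + ((j:ℝ)+1) * ℓ) (u i) hb1 (by nlinarith) hb2 hc1 (by linarith)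
    have hs1 : u i + κ - u i = κ := by ring
    have hs2 : a + ((j:ℝ)+1) * ℓ - (a + (j:ℝ) * ℓ) = ℓ := by ring
    rw [hs1] at e1
    rw [hs2] at e2
    have hkey : F i - (κ/ℓ) * A j = (F i - κ * G (u i)) - (κ/ℓ) * (A j - ℓ * G (u i)) := by
      field_simp
      ring
    rw [hkey]
    have h3 : |(κ/ℓ) * (A j - ℓ * G (u i))| ≤ (κ/ℓ) * (G1 * ℓ * ℓ) := by
      rw [abs_mul, abs_of_nonneg (by positivity : (0:ℝ) ≤ κ/ℓ)]
      exact mul_le_mul_of_nonneg_left e2 (by positivity)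
    have h4 : (κ/ℓ) * (G1 * ℓ * ℓ) = G1 * κ * ℓ := by field_simp
    calc |(F i - κ * G (u i)) - (κ/ℓ) * (A j - ℓ * G (u i))|
        ≤ |F i - κ * G (u i)| + |(κ/ℓ) * (A j - ℓ * G (u i))| :=
          abs_sub (F i - κ * G (u i)) ((κ/ℓ) * (A j - ℓ * G (u i)))
      _ ≤ G1 * κ * κ + G1 * κ * ℓ := by rw [h4] at h3; linarith
      _ ≤ 4 * G1 * κ * ν := by
          have m1 : G1 * κ * κ ≤ G1 * κ * ℓ :=
            mul_le_mul_of_nonneg_left hκℓ (mul_nonneg hG1nn hκ.le)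
          have m2 : G1 * κ * ℓ ≤ G1 * κ * (2 * ν) :=
            mul_le_mul_of_nonneg_left hℓν (mul_nonneg hG1nn hκ.le)
          linarith
  -- bound on |A j|
  have hAb : ∀ j < L, |A j| ≤ G0 * ℓ := by
    intro j hj
    obtain ⟨hb1, hb2⟩ := hIab j hj
    have := hbound (a + (j:ℝ) * ℓ) (a + ((j:ℝ)+1) * ℓ) hb1 (by nlinarith) hb2
    have hs2 : a + ((j:ℝ)+1) * ℓ - (a + (j:ℝ) * ℓ) = ℓ := by ring
    rwa [hs2] at this
  -- count bounds
  have hcnt : ∀ j < L, |((S j).card : ℝ) - H / L| ≤ γ * H / L := by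
    intro j hj
    obtain ⟨hlo, hhi⟩ := hcount j hj
    rw [abs_le]
    constructor
    · have : (1 - γ) * H / L = H / L - γ * H / L := by ring
      linarith [hlo, this ▸ hlo]
    · have : (1 + γ) * H / L = H / L + γ * H / L := by ring
      linarith [this ▸ hhi]
  -- per-block estimate
  have hblock : ∀ j < L, |(∑ i ∈ S j, F i) - (H/L) * ((κ/ℓ) * A j)| ≤
      4 * G1 * κ * ν * ((S j).card : ℝ) + γ * H * κ * G0 / L := by
    intro j hj
    have t1 : |(∑ i ∈ S j, F i) - ((S j).card : ℝ) * ((κ/ℓ) * A j)| ≤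
        ((S j).card : ℝ) * (4 * G1 * κ * ν) := by
      have : (∑ i ∈ S j, F i) - ((S j).card : ℝ) * ((κ/ℓ) * A j)
          = ∑ i ∈ S j, (F i - (κ/ℓ) * A j) := by
        rw [Finset.sum_sub_distrib, Finset.sum_const, nsmul_eq_mul]
      rw [this]
      calc |∑ i ∈ S j, (F i - (κ/ℓ) * A j)| ≤ ∑ i ∈ S j, |F i - (κ/ℓ) * A j| :=
            Finset.abs_sum_le_sum_abs _ _
        _ ≤ ∑ _i ∈ S j, (4 * G1 * κ * ν) := Finset.sum_le_sum (fun i hi => hFA j hj i hi)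
        _ = ((S j).card : ℝ) * (4 * G1 * κ * ν) := by rw [Finset.sum_const, nsmul_eq_mul]
    have t2 : |(((S j).card : ℝ) - H/L) * ((κ/ℓ) * A j)| ≤ γ * H * κ * G0 / L := by
      rw [abs_mul, abs_mul, abs_of_nonneg (by positivity : (0:ℝ) ≤ κ/ℓ)]
      have h1 := hcnt j hj
      have h2 := hAb j hj
      calc |((S j).card : ℝ) - H/L| * ((κ/ℓ) * |A j|)
          ≤ (γ * H / L) * ((κ/ℓ) * (G0 * ℓ)) := by
            have h3 : (κ/ℓ) * |A j| ≤ (κ/ℓ) * (G0 * ℓ) :=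
              mul_le_mul_of_nonneg_left h2 (by positivity)
            exact mul_le_mul h1 h3 (by positivity) (div_nonneg (mul_nonneg hγ0.le hH0.le) hL0.le)
        _ = γ * H * κ * G0 / L := by field_simp
    have hdec : (∑ i ∈ S j, F i) - (H/L) * ((κ/ℓ) * A j)
        = ((∑ i ∈ S j, F i) - ((S j).card : ℝ) * ((κ/ℓ) * A j))
          + ((((S j).card : ℝ) - H/L) * ((κ/ℓ) * A j)) := by ring
    rw [hdec]
    calc |_ + _| ≤ _ + _ := abs_add_le _ _
      _ ≤ ((S j).card : ℝ) * (4 * G1 * κ * ν) + γ * H * κ * G0 / L := add_le_add t1 t2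
      _ = 4 * G1 * κ * ν * ((S j).card : ℝ) + γ * H * κ * G0 / L := by ring
  -- the blocks are disjoint
  have hSdisj : (↑(Finset.range L) : Set ℕ).PairwiseDisjoint S := by
    intro j hj j' hj' hne
    simp only [Finset.disjoint_left]
    intro i hi hi'
    have h1 := (Finset.mem_filter.mp hi).2
    have h2 := (Finset.mem_filter.mp hi').2
    rcases lt_or_gt_of_ne hne with h | h
    · have : ((j:ℝ)+1) ≤ (j':ℝ) := by exact_mod_cast Nat.succ_le_of_lt h
      nlinarith [h1.2, h2.1]
    · have : ((j':ℝ)+1) ≤ (j:ℝ) := by exact_mod_cast Nat.succ_le_of_lt h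
      nlinarith [h1.1, h2.2]
  set U : Finset ℕ := (Finset.range L).biUnion S with hU
  have hUsub : U ⊆ Finset.range H := by
    intro i hi
    obtain ⟨j, _, hiS⟩ := Finset.mem_biUnion.mp hi
    exact (Finset.mem_filter.mp hiS).1
  have hUcard : (U.card : ℝ) = ∑ j ∈ Finset.range L, ((S j).card : ℝ) := by
    rw [Finset.card_biUnion (fun j hj j' hj' hne => hSdisj hj hj' hne)]
    push_cast
    rfl
  have hUsum : ∑ i ∈ U, F i = ∑ j ∈ Finset.range L, ∑ i ∈ S j, F i :=
    Finset.sum_biUnion hSdisj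
  -- sum of counts bounds
  have hcard_lo : (1 - γ) * H ≤ (U.card : ℝ) := by
    rw [hUcard]
    calc (1 - γ) * H = ∑ _j ∈ Finset.range L, ((1 - γ) * H / L) := by
          rw [Finset.sum_const, nsmul_eq_mul, Finset.card_range]; field_simp
      _ ≤ ∑ j ∈ Finset.range L, ((S j).card : ℝ) :=
          Finset.sum_le_sum (fun j hj => (hcount j (Finset.mem_range.mp hj)).1)
  have hcard_hi : (U.card : ℝ) ≤ (1 + γ) * H := by
    rw [hUcard]
    calc ∑ j ∈ Finset.range L, ((S j).card : ℝ)
        ≤ ∑ _j ∈ Finset.range L, ((1 + γ) * H / L) :=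
          Finset.sum_le_sum (fun j hj => (hcount j (Finset.mem_range.mp hj)).2)
      _ = (1 + γ) * H := by
          rw [Finset.sum_const, nsmul_eq_mul, Finset.card_range]; field_simp
  -- adjacent intervals sum
  have hadj : ∑ j ∈ Finset.range L, A j = ∫ x in a..b, G x := by
    have key := intervalIntegral.sum_integral_adjacent_intervals (μ := volume) (f := G)
      (a := fun j : ℕ => a + j * ℓ) (n := L) ?_
    · have h0 : a + (0:ℕ) * ℓ = a := by push_cast; ring
      have hLb : a + (L:ℕ) * ℓ = b := by rw [hba]
      rw [h0, hLb] at key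
      rw [← key]
      apply Finset.sum_congr rfl
      intro j _
      have : a + ((j:ℝ)+1) * ℓ = a + ((j+1 : ℕ):ℝ) * ℓ := by push_cast; ring
      simp only [hA]
      rw [this]
    · intro k hk
      obtain ⟨hb1, hb2⟩ := hIab k hk
      have hcast : a + ((k+1 : ℕ):ℝ) * ℓ = a + ((k:ℝ)+1) * ℓ := by push_cast; ring
      show IntervalIntegrable G volume (a + (k:ℝ) * ℓ) (a + ((k+1 : ℕ):ℝ) * ℓ)
      rw [hcast]
      exact hint _ _ hb1 (by nlinarith) hb2
  have hbapos : 0 < b - a := by linarith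
  -- proportional share decomposition
  have hshare : ((H:ℝ) * κ) / (b - a) * ∫ x in a..b, G x
      = ∑ j ∈ Finset.range L, (H/L) * ((κ/ℓ) * A j) := by
    rw [← Finset.mul_sum, ← Finset.mul_sum, hadj]
    have hba' : b - a = L * ℓ := by rw [hba]; ring
    have hℓne : ℓ ≠ 0 := ne_of_gt hℓ0
    have hLne : (L:ℝ) ≠ 0 := ne_of_gt hL0
    rw [hba']
    field_simp
  -- counted part estimate
  have hcounted : |(∑ i ∈ U, F i) - ((H:ℝ) * κ) / (b - a) * ∫ x in a..b, G x| ≤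
      4 * G1 * κ * ν * (U.card : ℝ) + γ * H * κ * G0 := by
    rw [hshare, hUsum, ← Finset.sum_sub_distrib]
    calc |∑ j ∈ Finset.range L, ((∑ i ∈ S j, F i) - (H/L) * ((κ/ℓ) * A j))|
        ≤ ∑ j ∈ Finset.range L, |(∑ i ∈ S j, F i) - (H/L) * ((κ/ℓ) * A j)| :=
          Finset.abs_sum_le_sum_abs _ _
      _ ≤ ∑ j ∈ Finset.range L,
            (4 * G1 * κ * ν * ((S j).card : ℝ) + γ * H * κ * G0 / L) :=
          Finset.sum_le_sum (fun j hj => hblock j (Finset.mem_range.mp hj))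
      _ = 4 * G1 * κ * ν * (U.card : ℝ) + γ * H * κ * G0 := by
          rw [Finset.sum_add_distrib, ← Finset.mul_sum, ← hUcard, Finset.sum_const,
            nsmul_eq_mul, Finset.card_range]
          field_simp
  -- crossers estimate
  have hFbound : ∀ i < H, |F i| ≤ G0 * κ := by
    intro i hi
    obtain ⟨ha1, ha2⟩ := hKab i hi
    have := hbound (u i) (u i + κ) ha1 (by linarith) ha2
    have hs : u i + κ - u i = κ := by ring
    rwa [hs] at this
  have hcross_card : ((Finset.range H \ U).card : ℝ) ≤ γ * H := by
    rw [Finset.card_sdiff_of_subset hUsub, Finset.card_range]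
    have hUH : U.card ≤ H := by
      have := Finset.card_le_card hUsub
      rwa [Finset.card_range] at this
    have : ((H - U.card : ℕ) : ℝ) = (H:ℝ) - (U.card : ℝ) := by
      push_cast [Nat.cast_sub hUH]
      ring
    rw [this]
    linarith [hcard_lo]
  have hcross : |∑ i ∈ Finset.range H \ U, F i| ≤ γ * H * (G0 * κ) := by
    calc |∑ i ∈ Finset.range H \ U, F i| ≤ ∑ i ∈ Finset.range H \ U, |F i| :=
          Finset.abs_sum_le_sum_abs _ _
      _ ≤ ∑ _i ∈ Finset.range H \ U, (G0 * κ) :=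
          Finset.sum_le_sum (fun i hi =>
            hFbound i (Finset.mem_range.mp (Finset.mem_sdiff.mp hi).1))
      _ = ((Finset.range H \ U).card : ℝ) * (G0 * κ) := by
          rw [Finset.sum_const, nsmul_eq_mul]
      _ ≤ γ * H * (G0 * κ) :=
          mul_le_mul_of_nonneg_right hcross_card (mul_nonneg hG0nn hκ.le)
  -- total decomposition
  have hsplit : ∑ i ∈ Finset.range H, F i = (∑ i ∈ U, F i) + ∑ i ∈ Finset.range H \ U, F i := by
    rw [add_comm, Finset.sum_sdiff hUsub]
  rw [hsplit]
  have habs : |(∑ i ∈ U, F i) + (∑ i ∈ Finset.range H \ U, F i)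
      - ((H:ℝ) * κ) / (b - a) * ∫ x in a..b, G x|
      ≤ |(∑ i ∈ U, F i) - ((H:ℝ) * κ) / (b - a) * ∫ x in a..b, G x|
        + |∑ i ∈ Finset.range H \ U, F i| := by
    have : (∑ i ∈ U, F i) + (∑ i ∈ Finset.range H \ U, F i)
        - ((H:ℝ) * κ) / (b - a) * ∫ x in a..b, G x
        = ((∑ i ∈ U, F i) - ((H:ℝ) * κ) / (b - a) * ∫ x in a..b, G x)
          + (∑ i ∈ Finset.range H \ U, F i) := by ring
    rw [this]
    exact abs_add_le _ _
  refine le_trans habs ?_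
  have hfinal : 4 * G1 * κ * ν * (U.card : ℝ) + γ * H * κ * G0 + γ * H * (G0 * κ)
      ≤ 8 * (ν * (G0 + G1) + γ * G0) * ((H:ℝ) * κ) := by
    have h1 : 4 * G1 * κ * ν * (U.card : ℝ) ≤ 4 * G1 * κ * ν * ((1 + γ) * H) := by
      have : (0:ℝ) ≤ 4 * G1 * κ * ν := by positivity
      nlinarith [hcard_hi]
    have h2 : 0 ≤ ν * G0 * ((H:ℝ) * κ) :=
      mul_nonneg (mul_nonneg hν0.le hG0nn) (mul_nonneg hH0.le hκ.le)
    have h3 : 0 ≤ ν * G1 * ((H:ℝ) * κ) * (1 - γ) :=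
      mul_nonneg (mul_nonneg (mul_nonneg hν0.le hG1nn) (mul_nonneg hH0.le hκ.le)) (by linarith)
    have h4 : 0 ≤ γ * G0 * ((H:ℝ) * κ) :=
      mul_nonneg (mul_nonneg hγ0.le hG0nn) (mul_nonneg hH0.le hκ.le)
    nlinarith [h1, h2, h3, h4]
  linarith [hcounted, hcross, hfinal]
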